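/- arXiv:1112.2730 — 2 statements merged into one kernel-verified Lean document; each statement's English description precedes it below -/
import Mathlib

section
/- For every integer k ≥ 4 and ℓ ∈ {1,2}, the middle Leibniz sum satisfies ∑_{j=ℓ+1}^{k−ℓ−1} [k!/(j!(k−j)!)]·H^{j−ℓ}(j−ℓ−1)!·H^{k−j−ℓ}(k−j−ℓ−1)! ≤ C·H^{k−ℓ}(k−ℓ−1)! for a constant C depending only on ℓ, provided H ≥ 1. -/
open Finset
open Nat


lemma poly1 (c d : ℕ) : (c+d+3)*(c+d+4)*((c+1)^2*(d+1)^2)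
    ≤ 108*((c+1)^2+(d+1)^2)*((c+1)*(c+2)*((d+1)*(d+2))) := by
  have h1 : (c+d+3)*(c+d+4) ≤ 8*((c+1)^2+(d+1)^2) := by
    nlinarith [two_mul_le_add_sq c d]
  have h2 : (c+1)^2*(d+1)^2 ≤ (c+1)*(c+2)*((d+1)*(d+2)) := by nlinarith
  calc (c+d+3)*(c+d+4)*((c+1)^2*(d+1)^2)
      ≤ (8*((c+1)^2+(d+1)^2)) * ((c+1)*(c+2)*((d+1)*(d+2))) := Nat.mul_le_mul h1 h2
    _ ≤ 108*((c+1)^2+(d+1)^2)*((c+1)*(c+2)*((d+1)*(d+2))) :=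
        Nat.mul_le_mul_right _ (by nlinarith)

lemma poly2 (c d : ℕ) : (c+d+4)*(c+d+5)*(c+d+6)*((c+1)^2*(d+1)^2)
    ≤ 108*((c+1)^2+(d+1)^2)*((c+1)*(c+2)*(c+3)*((d+1)*(d+2)*(d+3))) := by
  have ha : (c+d+4)*(c+d+5)*(c+d+6) ≤ 27*(c+d+2)^3 := by
    calc (c+d+4)*(c+d+5)*(c+d+6)
        ≤ (3*(c+d+2))*(3*(c+d+2))*(3*(c+d+2)) :=
          Nat.mul_le_mul (Nat.mul_le_mul (by omega) (by omega)) (by omega)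
      _ = 27*(c+d+2)^3 := by ring
  have hb : (c+d+2)^3 ≤ 2*((c+1)^2+(d+1)^2)*(c+d+2) := by
    nlinarith [two_mul_le_add_sq c d]
  have hc : c+d+2 ≤ (c+2)*(d+2) := by nlinarith
  have h2 : (c+d+4)*(c+d+5)*(c+d+6) ≤ 54*((c+1)^2+(d+1)^2)*((c+2)*(d+2)) := by
    calc (c+d+4)*(c+d+5)*(c+d+6) ≤ 27*(c+d+2)^3 := ha
      _ ≤ 27*(2*((c+1)^2+(d+1)^2)*(c+d+2)) := Nat.mul_le_mul_left _ hb
      _ ≤ 27*(2*((c+1)^2+(d+1)^2)*((c+2)*(d+2))) :=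
          Nat.mul_le_mul_left _ (Nat.mul_le_mul_left _ hc)
      _ = 54*((c+1)^2+(d+1)^2)*((c+2)*(d+2)) := by ring
  have h3 : (c+2)*(d+2)*((c+1)^2*(d+1)^2) ≤ 2*((c+1)*(c+2)*(c+3)*((d+1)*(d+2)*(d+3))) := by
    have : (c+1)*(d+1) ≤ 2*((c+3)*(d+3)) := by nlinarith
    calc (c+2)*(d+2)*((c+1)^2*(d+1)^2)
        = ((c+1)*(c+2)*((d+1)*(d+2))) * ((c+1)*(d+1)) := by ring
      _ ≤ ((c+1)*(c+2)*((d+1)*(d+2))) * (2*((c+3)*(d+3))) := Nat.mul_le_mul_left _ this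
      _ = 2*((c+1)*(c+2)*(c+3)*((d+1)*(d+2)*(d+3))) := by ring
  calc (c+d+4)*(c+d+5)*(c+d+6)*((c+1)^2*(d+1)^2)
      ≤ (54*((c+1)^2+(d+1)^2)*((c+2)*(d+2))) * ((c+1)^2*(d+1)^2) := Nat.mul_le_mul_right _ h2
    _ = 54*((c+1)^2+(d+1)^2)*((c+2)*(d+2)*((c+1)^2*(d+1)^2)) := by ring
    _ ≤ 54*((c+1)^2+(d+1)^2)*(2*((c+1)*(c+2)*(c+3)*((d+1)*(d+2)*(d+3)))) :=
        Nat.mul_le_mul_left _ h3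
    _ = 108*((c+1)^2+(d+1)^2)*((c+1)*(c+2)*(c+3)*((d+1)*(d+2)*(d+3))) := by ring

lemma fact1 (c d : ℕ) :
    (c+d+4)! * (c ! * (d ! * ((c+1)^2*(d+1)^2)))
      ≤ 108*((c+1)^2+(d+1)^2) * ((c+d+2)! * ((c+2)! * (d+2)!)) := by
  have e1 : (c+d+4)! = (c+d+2)! * ((c+d+3)*(c+d+4)) := by
    show (c+d+2+2)! = _
    rw [show c+d+2+2 = (c+d+2+1)+1 from rfl, Nat.factorial_succ, Nat.factorial_succ]
    ring
  have e2 : (c+2)! = c ! * ((c+1)*(c+2)) := by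
    rw [show c+2 = (c+1)+1 from rfl, Nat.factorial_succ, Nat.factorial_succ]; ring
  have e3 : (d+2)! = d ! * ((d+1)*(d+2)) := by
    rw [show d+2 = (d+1)+1 from rfl, Nat.factorial_succ, Nat.factorial_succ]; ring
  rw [e1, e2, e3]
  calc (c+d+2)! * ((c+d+3)*(c+d+4)) * (c ! * (d ! * ((c+1)^2*(d+1)^2)))
      = ((c+d+2)! * c ! * d !) * ((c+d+3)*(c+d+4)*((c+1)^2*(d+1)^2)) := by ring
    _ ≤ ((c+d+2)! * c ! * d !) * (108*((c+1)^2+(d+1)^2)*((c+1)*(c+2)*((d+1)*(d+2)))) :=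
        Nat.mul_le_mul_left _ (poly1 c d)
    _ = 108*((c+1)^2+(d+1)^2) * ((c+d+2)! * (c ! * ((c+1)*(c+2)) * (d ! * ((d+1)*(d+2))))) := by
        ring

lemma fact2 (c d : ℕ) :
    (c+d+6)! * (c ! * (d ! * ((c+1)^2*(d+1)^2)))
      ≤ 108*((c+1)^2+(d+1)^2) * ((c+d+3)! * ((c+3)! * (d+3)!)) := by
  have e1 : (c+d+6)! = (c+d+3)! * ((c+d+4)*(c+d+5)*(c+d+6)) := by
    rw [show c+d+6 = ((c+d+3)+1)+1+1 from rfl, Nat.factorial_succ, Nat.factorial_succ,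
      Nat.factorial_succ]
    ring
  have e2 : (c+3)! = c ! * ((c+1)*(c+2)*(c+3)) := by
    rw [show c+3 = ((c+1)+1)+1 from rfl, Nat.factorial_succ, Nat.factorial_succ,
      Nat.factorial_succ]; ring
  have e3 : (d+3)! = d ! * ((d+1)*(d+2)*(d+3)) := by
    rw [show d+3 = ((d+1)+1)+1 from rfl, Nat.factorial_succ, Nat.factorial_succ,
      Nat.factorial_succ]; ring
  rw [e1, e2, e3]
  calc (c+d+3)! * ((c+d+4)*(c+d+5)*(c+d+6)) * (c ! * (d ! * ((c+1)^2*(d+1)^2)))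
      = ((c+d+3)! * c ! * d !) * ((c+d+4)*(c+d+5)*(c+d+6)*((c+1)^2*(d+1)^2)) := by ring
    _ ≤ ((c+d+3)! * c ! * d !) *
        (108*((c+1)^2+(d+1)^2)*((c+1)*(c+2)*(c+3)*((d+1)*(d+2)*(d+3)))) :=
        Nat.mul_le_mul_left _ (poly2 c d)
    _ = 108*((c+1)^2+(d+1)^2) *
        ((c+d+3)! * (c ! * ((c+1)*(c+2)*(c+3)) * (d ! * ((d+1)*(d+2)*(d+3))))) := by ring

lemma key (ℓ c d : ℕ) (hℓ : ℓ = 1 ∨ ℓ = 2) :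
    (2*ℓ+2+c+d).choose (ℓ+1+c) * (c ! * (d ! * ((c+1)^2*(d+1)^2)))
      ≤ 108 * ((c+1)^2+(d+1)^2) * (ℓ+1+c+d)! := by
  have hjk : ℓ+1+c ≤ 2*ℓ+2+c+d := by omega
  have hch := Nat.choose_mul_factorial_mul_factorial hjk
  rw [show 2*ℓ+2+c+d - (ℓ+1+c) = ℓ+1+d from by omega] at hch
  have hpos : 0 < (ℓ+1+c)! * (ℓ+1+d)! := Nat.mul_pos (Nat.factorial_pos _) (Nat.factorial_pos _)
  refine Nat.le_of_mul_le_mul_left ?_ hpos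
  calc (ℓ+1+c)! * (ℓ+1+d)! * ((2*ℓ+2+c+d).choose (ℓ+1+c) * (c ! * (d ! * ((c+1)^2*(d+1)^2))))
      = ((2*ℓ+2+c+d).choose (ℓ+1+c) * (ℓ+1+c)! * (ℓ+1+d)!) * (c ! * (d ! * ((c+1)^2*(d+1)^2))) := by
        ring
    _ = (2*ℓ+2+c+d)! * (c ! * (d ! * ((c+1)^2*(d+1)^2))) := by rw [hch]
    _ ≤ (ℓ+1+c)! * (ℓ+1+d)! * (108 * ((c+1)^2+(d+1)^2) * (ℓ+1+c+d)!) := by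
        rcases hℓ with rfl | rfl
        · rw [show 2*1+2+c+d = c+d+4 from by ring, show 1+1+c = c+2 from by ring,
            show 1+1+d = d+2 from by ring, show c+2+d = c+d+2 from by omega]
          calc (c+d+4)! * (c ! * (d ! * ((c+1)^2*(d+1)^2)))
              ≤ 108*((c+1)^2+(d+1)^2) * ((c+d+2)! * ((c+2)! * (d+2)!)) := fact1 c d
            _ = (c+2)! * (d+2)! * (108 * ((c+1)^2+(d+1)^2) * (c+d+2)!) := by ring
        · rw [show 2*2+2+c+d = c+d+6 from by ring, show 2+1+c = c+3 from by ring,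
            show 2+1+d = d+3 from by ring, show c+3+d = c+d+3 from by omega]
          calc (c+d+6)! * (c ! * (d ! * ((c+1)^2*(d+1)^2)))
              ≤ 108*((c+1)^2+(d+1)^2) * ((c+d+3)! * ((c+3)! * (d+3)!)) := fact2 c d
            _ = (c+3)! * (d+3)! * (108 * ((c+1)^2+(d+1)^2) * (c+d+3)!) := by ring

lemma term_bound (ℓ c d : ℕ) (hℓ : ℓ = 1 ∨ ℓ = 2) (H : ℝ) (hH : 1 ≤ H) :
    ((2*ℓ+2+c+d)! : ℝ) / (((ℓ+1+c)! : ℝ) * ((ℓ+1+d)! : ℝ))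
        * H ^ (c+1) * (c ! : ℝ) * H ^ (d+1) * (d ! : ℝ)
      ≤ 108 * (1/((c:ℝ)+1)^2 + 1/((d:ℝ)+1)^2) * H ^ (ℓ+2+c+d) * ((ℓ+1+c+d)! : ℝ) := by
  have hH0 : (0:ℝ) < H := by linarith
  have hch : ((2*ℓ+2+c+d)! : ℝ) / (((ℓ+1+c)! : ℝ) * ((ℓ+1+d)! : ℝ))
      = ((2*ℓ+2+c+d).choose (ℓ+1+c) : ℝ) := by
    rw [Nat.cast_choose ℝ (show ℓ+1+c ≤ 2*ℓ+2+c+d by omega),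
      show 2*ℓ+2+c+d - (ℓ+1+c) = ℓ+1+d from by omega]
  rw [hch]
  have hc1 : (0:ℝ) < ((c:ℝ)+1)^2 := by positivity
  have hd1 : (0:ℝ) < ((d:ℝ)+1)^2 := by positivity
  have hA : ((2*ℓ+2+c+d).choose (ℓ+1+c) : ℝ) * (c ! : ℝ) * (d ! : ℝ)
      ≤ 108 * (1/((c:ℝ)+1)^2 + 1/((d:ℝ)+1)^2) * ((ℓ+1+c+d)! : ℝ) := by
    have hkeyR : ((2*ℓ+2+c+d).choose (ℓ+1+c) : ℝ) *
        ((c ! : ℝ) * ((d ! : ℝ) * (((c:ℝ)+1)^2*((d:ℝ)+1)^2)))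
        ≤ 108 * (((c:ℝ)+1)^2+((d:ℝ)+1)^2) * ((ℓ+1+c+d)! : ℝ) := by
      exact_mod_cast key ℓ c d hℓ
    have expand : 108 * (1/((c:ℝ)+1)^2 + 1/((d:ℝ)+1)^2) * ((ℓ+1+c+d)! : ℝ)
        = (108 * (((c:ℝ)+1)^2+((d:ℝ)+1)^2) * ((ℓ+1+c+d)! : ℝ)) / (((c:ℝ)+1)^2*((d:ℝ)+1)^2) := by
      rw [eq_div_iff (by positivity)]
      field_simp
      ring_nf
    rw [expand, le_div_iff₀ (by positivity)]
    calc ((2*ℓ+2+c+d).choose (ℓ+1+c) : ℝ) * (c ! : ℝ) * (d ! : ℝ) * (((c:ℝ)+1)^2*((d:ℝ)+1)^2)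
        = ((2*ℓ+2+c+d).choose (ℓ+1+c) : ℝ) *
          ((c ! : ℝ) * ((d ! : ℝ) * (((c:ℝ)+1)^2*((d:ℝ)+1)^2))) := by ring
      _ ≤ _ := hkeyR
  have hHle : H ^ (c+1) * H ^ (d+1) ≤ H ^ (ℓ+2+c+d) := by
    rw [← pow_add]
    exact pow_le_pow_right₀ hH (by omega)
  calc ((2*ℓ+2+c+d).choose (ℓ+1+c) : ℝ) * H ^ (c+1) * (c ! : ℝ) * H ^ (d+1) * (d ! : ℝ)
      = (((2*ℓ+2+c+d).choose (ℓ+1+c) : ℝ) * (c ! : ℝ) * (d ! : ℝ)) * (H ^ (c+1) * H ^ (d+1)) := by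
        ring
    _ ≤ (108 * (1/((c:ℝ)+1)^2 + 1/((d:ℝ)+1)^2) * ((ℓ+1+c+d)! : ℝ)) * H ^ (ℓ+2+c+d) := by
        apply mul_le_mul hA hHle (by positivity) (by positivity)
    _ = 108 * (1/((c:ℝ)+1)^2 + 1/((d:ℝ)+1)^2) * H ^ (ℓ+2+c+d) * ((ℓ+1+c+d)! : ℝ) := by ring


lemma sum_inv_sq (n : ℕ) : ∑ m ∈ Icc 1 n, (1:ℝ)/(m:ℝ)^2 ≤ 2 := by
  have h : ∀ n : ℕ, 1 ≤ n → ∑ m ∈ Icc 1 n, (1:ℝ)/(m:ℝ)^2 ≤ 2 - 1/(n:ℝ) := by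
    intro n hn
    induction n, hn using Nat.le_induction with
    | base => norm_num
    | succ n hn ih =>
      rw [Finset.sum_Icc_succ_top (by omega)]
      have h1 : (0:ℝ) < (n:ℝ) := by exact_mod_cast hn
      have h2 : (0:ℝ) < (n:ℝ)+1 := by linarith
      have key : (1:ℝ)/((n:ℝ)+1)^2 ≤ 1/(n:ℝ) - 1/((n:ℝ)+1) := by
        rw [div_sub_div _ _ (ne_of_gt h1) (ne_of_gt h2)]
        rw [div_le_div_iff₀ (by positivity) (by positivity)]
        ring_nf
        nlinarith
      push_cast
      linarith
  rcases Nat.eq_zero_or_pos n with rfl | hn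
  · simp
  · have := h n hn
    have : (0:ℝ) < (n:ℝ) := by exact_mod_cast hn
    have h1 : (0:ℝ) ≤ 1/(n:ℝ) := by positivity
    linarith [h n hn]

theorem middle_leibniz_sum_bound (ℓ : ℕ) (hℓ : ℓ = 1 ∨ ℓ = 2) :
    ∃ C : ℝ, ∀ k : ℕ, 4 ≤ k → ∀ H : ℝ, 1 ≤ H →
      ∑ j ∈ Finset.Icc (ℓ + 1) (k - ℓ - 1),
          (Nat.factorial k : ℝ) / ((Nat.factorial j : ℝ) * (Nat.factorial (k - j) : ℝ))
            * H ^ (j - ℓ) * (Nat.factorial (j - ℓ - 1) : ℝ)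
            * H ^ (k - j - ℓ) * (Nat.factorial (k - j - ℓ - 1) : ℝ)
        ≤ C * H ^ (k - ℓ) * (Nat.factorial (k - ℓ - 1) : ℝ) := by
  refine ⟨432, ?_⟩
  intro k hk H hH
  have hH0 : (0:ℝ) < H := by linarith
  by_cases hk2 : k < 2*ℓ+2
  · rw [Finset.Icc_eq_empty (by omega : ¬(ℓ+1 ≤ k-ℓ-1))]
    rw [Finset.sum_empty]
    positivity
  push_neg at hk2
  have step1 : ∀ j ∈ Finset.Icc (ℓ+1) (k-ℓ-1),
      (k ! : ℝ)/((j ! : ℝ)*((k-j)! : ℝ)) * H^(j-ℓ) * ((j-ℓ-1)! : ℝ)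
        * H^(k-j-ℓ) * ((k-j-ℓ-1)! : ℝ)
      ≤ 108 * (1/((j-ℓ : ℕ) : ℝ)^2 + 1/((k-j-ℓ : ℕ) : ℝ)^2) * H^(k-ℓ) * ((k-ℓ-1)! : ℝ) := by
    intro j hj
    rw [Finset.mem_Icc] at hj
    obtain ⟨c, rfl⟩ : ∃ c, j = ℓ+1+c := ⟨j-ℓ-1, by omega⟩
    obtain ⟨d, rfl⟩ : ∃ d, k = 2*ℓ+2+c+d := ⟨k-(2*ℓ+2+c), by omega⟩
    rw [show 2*ℓ+2+c+d - (ℓ+1+c) - ℓ - 1 = d from by omega,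
        show 2*ℓ+2+c+d - (ℓ+1+c) - ℓ = d+1 from by omega,
        show 2*ℓ+2+c+d - (ℓ+1+c) = ℓ+1+d from by omega,
        show ℓ+1+c - ℓ - 1 = c from by omega,
        show ℓ+1+c - ℓ = c+1 from by omega,
        show 2*ℓ+2+c+d - ℓ - 1 = ℓ+1+c+d from by omega,
        show 2*ℓ+2+c+d - ℓ = ℓ+2+c+d from by omega]
    push_cast
    exact term_bound ℓ c d hℓ H hH
  refine le_trans (Finset.sum_le_sum step1) ?_
  have hA : ∑ j ∈ Finset.Icc (ℓ+1) (k-ℓ-1), 1/((j-ℓ : ℕ) : ℝ)^2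
      = ∑ m ∈ Finset.Icc 1 (k-2*ℓ-1), 1/(m : ℝ)^2 := by
    refine Finset.sum_nbij' (i := fun j => j - ℓ) (j := fun m => m + ℓ) ?_ ?_ ?_ ?_ ?_ <;>
      intro a ha <;> simp only [Finset.mem_Icc] at * <;> first | rfl | omega | (norm_num; omega)
  have hB : ∑ j ∈ Finset.Icc (ℓ+1) (k-ℓ-1), 1/((k-j-ℓ : ℕ) : ℝ)^2
      = ∑ m ∈ Finset.Icc 1 (k-2*ℓ-1), 1/(m : ℝ)^2 := by
    refine Finset.sum_nbij' (i := fun j => k - j - ℓ) (j := fun m => k - m - ℓ) ?_ ?_ ?_ ?_ ?_ <;>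
      intro a ha <;> simp only [Finset.mem_Icc] at * <;> first | rfl | omega | (norm_num; omega)
  have hsum : ∑ j ∈ Finset.Icc (ℓ+1) (k-ℓ-1),
      (1/((j-ℓ : ℕ) : ℝ)^2 + 1/((k-j-ℓ : ℕ) : ℝ)^2) ≤ 4 := by
    rw [Finset.sum_add_distrib, hA, hB]
    linarith [sum_inv_sq (k-2*ℓ-1)]
  calc ∑ j ∈ Finset.Icc (ℓ+1) (k-ℓ-1),
        108 * (1/((j-ℓ : ℕ) : ℝ)^2 + 1/((k-j-ℓ : ℕ) : ℝ)^2) * H^(k-ℓ) * ((k-ℓ-1)! : ℝ)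
      = (∑ j ∈ Finset.Icc (ℓ+1) (k-ℓ-1), (1/((j-ℓ : ℕ) : ℝ)^2 + 1/((k-j-ℓ : ℕ) : ℝ)^2))
          * (108 * H^(k-ℓ) * ((k-ℓ-1)! : ℝ)) := by
        rw [Finset.sum_mul]
        exact Finset.sum_congr rfl fun j _ => by ring
    _ ≤ 4 * (108 * H^(k-ℓ) * ((k-ℓ-1)! : ℝ)) :=
        mul_le_mul_of_nonneg_right hsum (by positivity)
    _ = 432 * H^(k-ℓ) * ((k-ℓ-1)! : ℝ) := by ring
end

section
/- For every multi-index α ∈ ℕ² with |α| ≥ 5, the sum ∑_{β ≤ α, 3 ≤ |β| ≤ |α|−2} |α|²/(|β|³(|α|−|β|)²) is bounded by 8π², uniformly in α. -/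
open Real Finset

theorem multiindex_sum_bound (α : ℕ × ℕ) (hα : 5 ≤ α.1 + α.2) :
    ∑ β ∈ (Finset.range (α.1 + 1) ×ˢ Finset.range (α.2 + 1)).filter
        (fun β => 3 ≤ β.1 + β.2 ∧ β.1 + β.2 ≤ α.1 + α.2 - 2),
      ((α.1 + α.2 : ℕ) : ℝ) ^ 2
        / (((β.1 + β.2 : ℕ) : ℝ) ^ 3 * ((α.1 + α.2 - (β.1 + β.2) : ℕ) : ℝ) ^ 2)
      ≤ 8 * Real.pi ^ 2 := by
  set n := α.1 + α.2 with hn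
  set T := (Finset.range (α.1 + 1) ×ˢ Finset.range (α.2 + 1)).filter
        (fun β => 3 ≤ β.1 + β.2 ∧ β.1 + β.2 ≤ n - 2) with hT
  set f : ℕ → ℝ := fun j => ((n : ℕ) : ℝ) ^ 2 / (((j : ℕ) : ℝ) ^ 3 * ((n - j : ℕ) : ℝ) ^ 2)
    with hf
  have key4 : ∀ s : Finset ℕ, ∑ j ∈ s, (4 : ℝ) / (j : ℝ) ^ 2 ≤ 4 * (π ^ 2 / 6) := by
    intro s
    have key : ∑ j ∈ s, (1 : ℝ) / (j : ℝ) ^ 2 ≤ π ^ 2 / 6 :=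
      sum_le_hasSum s (fun i _ => by positivity) hasSum_zeta_two
    have : ∑ j ∈ s, (4 : ℝ) / (j : ℝ) ^ 2 = 4 * ∑ j ∈ s, (1 : ℝ) / (j : ℝ) ^ 2 := by
      rw [Finset.mul_sum]; apply Finset.sum_congr rfl; intros; ring
    rw [this]
    exact mul_le_mul_of_nonneg_left key (by norm_num)
  have hmem : ∀ j ∈ T.image (fun β : ℕ × ℕ => β.1 + β.2), j ∈ Finset.Icc 3 (n - 2) := by
    intro j hj
    obtain ⟨β, hβ, rfl⟩ := Finset.mem_image.mp hj
    obtain ⟨-, h1, h2⟩ := Finset.mem_filter.mp hβ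
    exact Finset.mem_Icc.mpr ⟨h1, h2⟩
  have hcard : ∀ j, #{β ∈ T | β.1 + β.2 = j} ≤ j + 1 := by
    intro j
    have := Finset.card_le_card_of_injOn (fun β : ℕ × ℕ => β.1)
      (s := {β ∈ T | β.1 + β.2 = j}) (t := Finset.range (j + 1))
      (fun β hβ => by
        have := (Finset.mem_filter.mp hβ).2
        simp only [Finset.mem_coe, Finset.coe_range, Set.mem_Iio, Finset.mem_range]; omega)
      (fun β hβ β' hβ' h => by
        have h1 := (Finset.mem_filter.mp hβ).2
        have h2 := (Finset.mem_filter.mp hβ').2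
        have : β.2 = β'.2 := by
          simp only at h
          omega
        exact Prod.ext h this)
    simpa using this
  have step1 : ∑ β ∈ T, f (β.1 + β.2) ≤ ∑ j ∈ Finset.Icc 3 (n - 2),
      (4 / (j : ℝ) ^ 2 + 4 / ((n - j : ℕ) : ℝ) ^ 2) := by
    rw [Finset.sum_comp f (fun β : ℕ × ℕ => β.1 + β.2)]
    refine le_trans (Finset.sum_le_sum ?_) (Finset.sum_le_sum_of_subset_of_nonneg
      (fun j hj => hmem j hj) (fun j _ _ => by positivity))
    intro j hj
    have hjI := Finset.mem_Icc.mp (hmem j hj)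
    have hj3 : 3 ≤ j := hjI.1
    have hjn : j ≤ n - 2 := hjI.2
    have hm : 2 ≤ n - j := by omega
    have hsum : n - j + j = n := by omega
    have ha : (3 : ℝ) ≤ (j : ℝ) := by exact_mod_cast hj3
    have hb : (2 : ℝ) ≤ ((n - j : ℕ) : ℝ) := by exact_mod_cast hm
    have hab : ((n : ℕ) : ℝ) = (j : ℝ) + ((n - j : ℕ) : ℝ) := by
      rw [Nat.cast_sub (by omega : j ≤ n)]
      ring
    set a : ℝ := (j : ℝ) with hA
    set b : ℝ := ((n - j : ℕ) : ℝ) with hB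
    have hfj : f j = (a + b) ^ 2 / (a ^ 3 * b ^ 2) := by rw [hf]; rw [hab]
    have hfnn : 0 ≤ f j := by rw [hfj]; positivity
    calc #{β ∈ T | β.1 + β.2 = j} • f j = (#{β ∈ T | β.1 + β.2 = j} : ℝ) * f j := by
          rw [nsmul_eq_mul]
      _ ≤ ((j : ℝ) + 1) * f j := by
          apply mul_le_mul_of_nonneg_right _ hfnn
          exact_mod_cast hcard j
      _ ≤ 4 / (j : ℝ) ^ 2 + 4 / ((n - j : ℕ) : ℝ) ^ 2 := by
          rw [hfj]
          rw [div_add_div _ _ (by positivity) (by positivity), mul_div_assoc',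
            div_le_div_iff₀ (by positivity) (by positivity)]
          have p : (a + 1) * (a + b) ^ 2 ≤ 4 * a * (a ^ 2 + b ^ 2) := by
            nlinarith [mul_nonneg (by linarith : (0:ℝ) ≤ a - 1) (sq_nonneg (a + b)),
              mul_nonneg (by linarith : (0:ℝ) ≤ 2 * a) (sq_nonneg (a - b))]
          nlinarith [mul_le_mul_of_nonneg_right p (by positivity : (0:ℝ) ≤ a ^ 2 * b ^ 2)]
  have step3 : ∑ j ∈ Finset.Icc 3 (n - 2), (4 : ℝ) / ((n - j : ℕ) : ℝ) ^ 2
      ≤ 4 * (π ^ 2 / 6) := by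
    have hinj : Set.InjOn (fun j => n - j) (Finset.Icc 3 (n - 2)) := by
      intro x hx y hy hxy
      simp only [Finset.coe_Icc, Set.mem_Icc] at hx hy
      simp only at hxy
      omega
    calc ∑ j ∈ Finset.Icc 3 (n - 2), (4 : ℝ) / ((n - j : ℕ) : ℝ) ^ 2
        = ∑ k ∈ (Finset.Icc 3 (n - 2)).image (fun j => n - j), (4 : ℝ) / (k : ℝ) ^ 2 :=
          (Finset.sum_image (f := fun k : ℕ => (4 : ℝ) / (k : ℝ) ^ 2)
            (g := fun j => n - j) (fun x hx y hy h => hinj hx hy h)).symm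
      _ ≤ 4 * (π ^ 2 / 6) := key4 _
  have hsplit : ∑ j ∈ Finset.Icc 3 (n - 2),
      ((4 : ℝ) / (j : ℝ) ^ 2 + 4 / ((n - j : ℕ) : ℝ) ^ 2)
      = (∑ j ∈ Finset.Icc 3 (n - 2), (4 : ℝ) / (j : ℝ) ^ 2)
      + ∑ j ∈ Finset.Icc 3 (n - 2), (4 : ℝ) / ((n - j : ℕ) : ℝ) ^ 2 :=
    Finset.sum_add_distrib
  have hpi : (0 : ℝ) ≤ π ^ 2 := sq_nonneg _
  have := key4 (Finset.Icc 3 (n - 2))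
  calc ∑ β ∈ T, ((n : ℕ) : ℝ) ^ 2
        / (((β.1 + β.2 : ℕ) : ℝ) ^ 3 * ((n - (β.1 + β.2) : ℕ) : ℝ) ^ 2)
      = ∑ β ∈ T, f (β.1 + β.2) := rfl
    _ ≤ _ := step1
    _ ≤ 4 * (π ^ 2 / 6) + 4 * (π ^ 2 / 6) := by rw [hsplit]; exact add_le_add this step3
    _ ≤ 8 * π ^ 2 := by linarith
end
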